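/- arXiv:0901.4376 — 7 statements merged into one kernel-verified Lean document; each statement's English description precedes it below -/
import Mathlib

section
/- Let R be a commutative ring and X1,X2,X3,Y1,Y2,Y3 ∈ R with X1+X2+X3+Y1+Y2+Y3 = 0. With Z1 = X1+Y2+Y3, Z2 = Y1+X2+Y3, Z3 = Y1+Y2+X3 and Q = (X1*Y1+X2*Y2−X3*Y3)^2 − 4*X1*Y1*X2*Y2, the following three identities hold: Q = (X1*X2+Y1*Y2−Z1*Z2)^2 − 4*X1*X2*Y1*Y2, Q = (X1*X3+Y1*Y3−Z1*Z3)^2 − 4*X1*X3*Y1*Y3, and Q = (X2*X3+Y2*Y3−Z2*Z3)^2 − 4*X2*X3*Y2*Y3. -/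
/-- Riemann model identities: the pairs {X1 X2, Y1 Y2, Z1 Z2}, {X1 X3, Y1 Y3, Z1 Z3}
and {X2 X3, Y2 Y3, Z2 Z3} give the same quartic Q. -/
theorem riemann_model_identities_ZZ {R : Type*} [CommRing R]
    (X1 X2 X3 Y1 Y2 Y3 Z1 Z2 Z3 Q : R)
    (hsum : X1 + X2 + X3 + Y1 + Y2 + Y3 = 0)
    (hZ1 : Z1 = X1 + Y2 + Y3)
    (hZ2 : Z2 = Y1 + X2 + Y3)
    (hZ3 : Z3 = Y1 + Y2 + X3)
    (hQ : Q = (X1 * Y1 + X2 * Y2 - X3 * Y3) ^ 2 - 4 * X1 * Y1 * X2 * Y2) :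
    Q = (X1 * X2 + Y1 * Y2 - Z1 * Z2) ^ 2 - 4 * X1 * X2 * Y1 * Y2 ∧
    Q = (X1 * X3 + Y1 * Y3 - Z1 * Z3) ^ 2 - 4 * X1 * X3 * Y1 * Y3 ∧
    Q = (X2 * X3 + Y2 * Y3 - Z2 * Z3) ^ 2 - 4 * X2 * X3 * Y2 * Y3 := by
  have hX1 : X1 = -(X2 + X3 + Y1 + Y2 + Y3) := by linear_combination hsum
  subst hZ1 hZ2 hZ3 hQ hX1
  refine ⟨by ring, by ring, by ring⟩
end

section
/- Let R be a commutative ring and X1,X2,X3,Y1,Y2,Y3 ∈ R with X1+X2+X3+Y1+Y2+Y3 = 0. With W = X1+X2+X3, Z1 = X1+Y2+Y3, Z2 = Y1+X2+Y3, Z3 = Y1+Y2+X3 and Q = (X1*Y1+X2*Y2−X3*Y3)^2 − 4*X1*Y1*X2*Y2, the following three identities hold: Q = (X1*W+Y2*Z3−Y3*Z2)^2 − 4*X1*W*Y2*Z3, Q = (X2*W+Y1*Z3−Y3*Z1)^2 − 4*X2*W*Y1*Z3, and Q = (X3*W+Y1*Z2−Y2*Z1)^2 − 4*X3*W*Y1*Z2.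 -/
/-- Riemann model identities: the pairs {X1 W, Y2 Z3, Y3 Z2}, {X2 W, Y1 Z3, Y3 Z1}
and {X3 W, Y1 Z2, Y2 Z1} give the same quartic Q. -/
theorem riemann_model_identities_XW {R : Type*} [CommRing R]
    (X1 X2 X3 Y1 Y2 Y3 W Z1 Z2 Z3 Q : R)
    (hsum : X1 + X2 + X3 + Y1 + Y2 + Y3 = 0)
    (hW : W = X1 + X2 + X3)
    (hZ1 : Z1 = X1 + Y2 + Y3)
    (hZ2 : Z2 = Y1 + X2 + Y3)
    (hZ3 : Z3 = Y1 + Y2 + X3)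
    (hQ : Q = (X1 * Y1 + X2 * Y2 - X3 * Y3) ^ 2 - 4 * X1 * Y1 * X2 * Y2) :
    Q = (X1 * W + Y2 * Z3 - Y3 * Z2) ^ 2 - 4 * X1 * W * Y2 * Z3 ∧
    Q = (X2 * W + Y1 * Z3 - Y3 * Z1) ^ 2 - 4 * X2 * W * Y1 * Z3 ∧
    Q = (X3 * W + Y1 * Z2 - Y2 * Z1) ^ 2 - 4 * X3 * W * Y1 * Z2 := by
  have h3 : X3 = -(X1 + X2 + Y1 + Y2 + Y3) := by linear_combination hsum
  subst hW hZ1 hZ2 hZ3 hQ h3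
  refine ⟨by ring, by ring, by ring⟩
end

section
/- Let K be a field and let X1,X2,X3,Y1,Y2,Y3 be homogeneous polynomials of degree 1 in K[x,y,z] (i.e. in MvPolynomial (Fin 3) K) with X1+X2+X3+Y1+Y2+Y3 = 0. Set W = X1+X2+X3, Z1 = X1+Y2+Y3, Z2 = Y1+X2+Y3, Z3 = Y1+Y2+X3 and Q = (X1*Y1+X2*Y2−X3*Y3)^2 − 4*X1*Y1*X2*Y2. Then each of the ten linear forms X1, Y1, X2, Y2, X3, Y3, W, Z1, Z2, Z3 divides the difference of Q and the square of an explicit quadratic form; precisely: X1 and Y1 each divide Q − (X2*Y2−X3*Y3)^2; X2 and Y2 each divide Q − (X1*Y1−X3*Y3)^2; X3 and Y3 each divide Q − (X1*Y1−X2*Y2)^2; W divides Q − (X1*Y2−X2*Y1)^2; Z1 divides Q − (X2*Z2−X3*Z3)^2; Z2 divides Q − (X1*Z1−X3*Z3)^2; and Z3 divides Q − (Y2*W−X3*Z1)^2. (This expresses that X1=0,…,Y3=0,W=0,Z1=0,Z2=0,Z3=0 are all bitangent lines of the plane quartic Q=0: the restriction of Q to each of these lines is the square of a quadratic form.) -/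
open MvPolynomial

/-- The ten lines X1, Y1, X2, Y2, X3, Y3, W, Z1, Z2, Z3 are bitangents of the
Riemann model Q = (X1Y1 + X2Y2 - X3Y3)^2 - 4X1Y1X2Y2: the restriction of Q to
each of these lines is the square of a quadratic form. -/
theorem bitangents_of_riemann_model {K : Type*} [Field K]
    (X1 X2 X3 Y1 Y2 Y3 : MvPolynomial (Fin 3) K)
    (hX1 : X1.IsHomogeneous 1) (hX2 : X2.IsHomogeneous 1) (hX3 : X3.IsHomogeneous 1)
    (hY1 : Y1.IsHomogeneous 1) (hY2 : Y2.IsHomogeneous 1) (hY3 : Y3.IsHomogeneous 1)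
    (hsum : X1 + X2 + X3 + Y1 + Y2 + Y3 = 0)
    (W Z1 Z2 Z3 Q : MvPolynomial (Fin 3) K)
    (hW : W = X1 + X2 + X3)
    (hZ1 : Z1 = X1 + Y2 + Y3)
    (hZ2 : Z2 = Y1 + X2 + Y3)
    (hZ3 : Z3 = Y1 + Y2 + X3)
    (hQ : Q = (X1 * Y1 + X2 * Y2 - X3 * Y3) ^ 2 - 4 * X1 * Y1 * X2 * Y2) :
    X1 ∣ Q - (X2 * Y2 - X3 * Y3) ^ 2 ∧
    Y1 ∣ Q - (X2 * Y2 - X3 * Y3) ^ 2 ∧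
    X2 ∣ Q - (X1 * Y1 - X3 * Y3) ^ 2 ∧
    Y2 ∣ Q - (X1 * Y1 - X3 * Y3) ^ 2 ∧
    X3 ∣ Q - (X1 * Y1 - X2 * Y2) ^ 2 ∧
    Y3 ∣ Q - (X1 * Y1 - X2 * Y2) ^ 2 ∧
    W ∣ Q - (X1 * Y2 - X2 * Y1) ^ 2 ∧
    Z1 ∣ Q - (X2 * Z2 - X3 * Z3) ^ 2 ∧
    Z2 ∣ Q - (X1 * Z1 - X3 * Z3) ^ 2 ∧
    Z3 ∣ Q - (Y2 * W - X3 * Z1) ^ 2 := by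
  subst hW hZ1 hZ2 hZ3 hQ
  refine ⟨⟨Y1 * (X1 * Y1 - 2 * X2 * Y2 - 2 * X3 * Y3), by ring⟩,
    ⟨X1 * (X1 * Y1 - 2 * X2 * Y2 - 2 * X3 * Y3), by ring⟩,
    ⟨Y2 * (X2 * Y2 - 2 * X1 * Y1 - 2 * X3 * Y3), by ring⟩,
    ⟨X2 * (X2 * Y2 - 2 * X1 * Y1 - 2 * X3 * Y3), by ring⟩,
    ⟨Y3 * (X3 * Y3 - 2 * X1 * Y1 - 2 * X2 * Y2), by ring⟩,
    ⟨X3 * (X3 * Y3 - 2 * X1 * Y1 - 2 * X2 * Y2), by ring⟩,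
    ⟨X3*Y2 ^ 2 + (-2)*X3*Y1*Y3 + (-1)*X3*Y1 ^ 2 + (-1)*X3 ^ 2*Y3 + X3 ^ 2*Y2 + (-1)*X3 ^ 2*Y1 + X2*Y2 ^ 2 + (-1)*X2*Y1 ^ 2 + 2*X2*X3*Y2 + (-2)*X2*X3*Y1 + (-1)*X1*Y2 ^ 2 + X1*Y1 ^ 2, by linear_combination (X3 ^ 2*Y3 + (-1)*X3 ^ 2*Y2 + X3 ^ 2*Y1 + (-2)*X2*X3*Y2 + 2*X2*X3*Y1) * hsum⟩,
    ⟨(-1)*Y1*Y3 ^ 2 + (-2)*Y1*Y2*Y3 + (-1)*Y1*Y2 ^ 2 + (-1)*Y1 ^ 2*Y3 + (-1)*Y1 ^ 2*Y2 + (-1)*X3*Y3 ^ 2 + X3*Y2 ^ 2 + (-2)*X3*Y1*Y3 + 2*X3 ^ 2*Y2 + X3 ^ 2*Y1 + X3 ^ 3 + X2*Y3 ^ 2 + (-1)*X2*Y2 ^ 2 + (-2)*X2*Y1*Y2 + (-2)*X2*X3*Y3 + (-2)*X2*X3*Y2 + (-2)*X2*X3*Y1 + (-1)*X2*X3 ^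 2 + 2*X2 ^ 2*Y3 + X2 ^ 2*Y1 + (-1)*X2 ^ 2*X3 + X2 ^ 3 + X1*Y1 ^ 2, by linear_combination (Y1*Y3 ^ 2 + 2*Y1*Y2*Y3 + Y1*Y2 ^ 2 + X3*Y3 ^ 2 + (-1)*X3*Y2 ^ 2 + (-2)*X3 ^ 2*Y2 + (-1)*X3 ^ 2*Y1 + (-1)*X3 ^ 3 + (-1)*X2*Y3 ^ 2 + X2*Y2 ^ 2 + 2*X2*X3*Y3 + 2*X2*X3*Y2 + 2*X2*X3*Y1 + X2*X3 ^ 2 + (-2)*X2 ^ 2*Y3 + (-1)*X2 ^ 2*Y1 + X2 ^ 2*X3 + (-1)*X2 ^ 3) * hsum⟩,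
    ⟨(-1)*X3 ^ 2*Y3 + (-1)*X3 ^ 2*Y2 + (-1)*X3 ^ 2*Y1 + (-1)*X3 ^ 3 + 2*X2*X3*Y3 + (-1)*X2*X3 ^ 2 + (-1)*X2 ^ 2*Y2 + X2 ^ 2*X3 + (-1)*X1*X3 ^ 2 + (-2)*X1*X2*Y3 + (-2)*X1*X2*Y2 + 2*X1*X2*X3 + (-1)*X1*X2 ^ 2 + X1 ^ 2*Y3 + X1 ^ 2*Y2 + X1 ^ 2*Y1 + X1 ^ 2*X3 + (-1)*X1 ^ 2*X2 + X1 ^ 3, by linear_combination (2*X3 ^ 2*Y3 + (-1)*X3 ^ 2*Y2 + (-1)*X3 ^ 3 + (-2)*X2*X3*Y3 + 2*X2*X3 ^ 2 + X2 ^ 2*Y2 + (-1)*X2 ^ 2*X3 + 2*X1*X3*Y2 + X1*X3 ^ 2 + 2*X1*X2*Y3 + (-2)*X1*X2*X3 + X1*X2 ^ 2 + (-2)*X1 ^ 2*Y3 + (-1)*X1 ^ 2*Y2 + X1 ^ 2*X3 + (-1)*X1 ^ 3) * hsum⟩,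
    ⟨(-2)*X1*X3*Y3 + (-4)*X1*X3*Y2 + (-2)*X1*X2*Y2 + (-1)*X1 ^ 2*Y2 + X1 ^ 2*Y1 + (-1)*X1 ^ 2*X3, by linear_combination (4*X1*X3*Y2) * hsum⟩⟩
end

section
/- Let K be a field and let X1,X2,X3,Y1,Y2,Y3 be homogeneous polynomials of degree 1 in K[x,y,z] (MvPolynomial (Fin 3) K), and set Q = (X1*Y1+X2*Y2−X3*Y3)^2 − 4*X1*Y1*X2*Y2. If P ∈ K^3 is a common zero of X1, X2 and X3, then P is a singular point of the quartic Q = 0: Q vanishes at P and all three partial derivatives of Q vanish at P. Consequently, if the projective plane curve Q = 0 is non-singular, the three bitangent lines X1=0, X2=0, X3=0 do not pass through a common point of the projective plane (Proposition: three asyzygetic bitangent lines do not cross in a point). -/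
open MvPolynomial

/-- A common zero of the three bitangents X1, X2, X3 of the Riemann model
Q = (X1Y1 + X2Y2 - X3Y3)^2 - 4X1Y1X2Y2 is a singular point of the quartic Q = 0;
consequently, if Q = 0 is non-singular then three asyzygetic bitangent lines do
not cross in a point. -/
theorem asyzygetic_bitangents_not_concurrent {K : Type*} [Field K]
    (X1 X2 X3 Y1 Y2 Y3 : MvPolynomial (Fin 3) K)
    (hX1 : X1.IsHomogeneous 1) (hX2 : X2.IsHomogeneous 1) (hX3 : X3.IsHomogeneous 1)
    (hY1 : Y1.IsHomogeneous 1) (hY2 : Y2.IsHomogeneous 1) (hY3 : Y3.IsHomogeneous 1)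
    (Q : MvPolynomial (Fin 3) K)
    (hQ : Q = (X1 * Y1 + X2 * Y2 - X3 * Y3) ^ 2 - 4 * X1 * Y1 * X2 * Y2) :
    (∀ P : Fin 3 → K, eval P X1 = 0 → eval P X2 = 0 → eval P X3 = 0 →
      eval P Q = 0 ∧ ∀ i : Fin 3, eval P (pderiv i Q) = 0) ∧
    ((∀ P : Fin 3 → K, P ≠ 0 → eval P Q = 0 →
        ∃ i : Fin 3, eval P (pderiv i Q) ≠ 0) →
      ∀ P : Fin 3 → K, P ≠ 0 →
        ¬(eval P X1 = 0 ∧ eval P X2 = 0 ∧ eval P X3 = 0)) := by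
  subst hQ
  have main : ∀ P : Fin 3 → K, eval P X1 = 0 → eval P X2 = 0 → eval P X3 = 0 →
      eval P ((X1 * Y1 + X2 * Y2 - X3 * Y3) ^ 2 - 4 * X1 * Y1 * X2 * Y2) = 0 ∧
      ∀ i : Fin 3, eval P (pderiv i ((X1 * Y1 + X2 * Y2 - X3 * Y3) ^ 2 - 4 * X1 * Y1 * X2 * Y2)) = 0 := by
    intro P h1 h2 h3
    constructor
    · simp [h1, h2, h3]
    · intro i
      simp only [map_sub, map_add, map_mul, map_pow, Derivation.leibniz, Derivation.leibniz_pow,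
        smul_eq_mul]
      simp [h1, h2, h3]
  refine ⟨main, fun hns P hP hc => ?_⟩
  obtain ⟨h1, h2, h3⟩ := hc
  obtain ⟨hq, hd⟩ := main P h1 h2 h3
  obtain ⟨i, hi⟩ := hns P hP hq
  exact hi (hd i)
end

section
/- Let K be a field, let X1,Y1,X2,Y2,X3,Y3,X4,Y4 ∈ K^3 be coefficient vectors of linear forms on K^3, and let λ ∈ K. Assume the quadratic-form identity λ^2·ℓ_{X1}(v)·ℓ_{Y1}(v) + ℓ_{X2}(v)·ℓ_{Y2}(v) + λ·ℓ_{X3}(v)·ℓ_{Y3}(v) = ℓ_{X4}(v)·ℓ_{Y4}(v) holds for all v ∈ K^3. Then: λ·(X3 X1 X2)·(Y3 X1 X2) = (X4 X1 X2)·(Y4 X1 X2); λ·(X3 X1 Y2)·(Y3 X1 Y2) = (X4 X1 Y2)·(Y4 X1 Y2); λ·(X3 Y1 X2)·(Y3 Y1 X2) = (X4 Y1 X2)·(Y4 Y1 X2); and λ·(X3 Y1 Y2)·(Y3 Y1 Y2) = (X4 Y1 Y2)·(Y4 Y1 Y2). -/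
open Matrix

/-- The determinant of the 3×3 matrix with rows A, B, C. -/
def det3 {K : Type*} [Field K] (A B C : Fin 3 → K) : K :=
  Matrix.det (Matrix.of ![A, B, C])

/-- The cross product of two vectors in `K^3`. -/
def cross3 {K : Type*} [Field K] (A B : Fin 3 → K) : Fin 3 → K :=
  ![A 1 * B 2 - A 2 * B 1, A 2 * B 0 - A 0 * B 2, A 0 * B 1 - A 1 * B 0]

lemma dot_cross3 {K : Type*} [Field K] (C A B : Fin 3 → K) :
    C ⬝ᵥ cross3 A B = det3 C A B := by
  simp [cross3, det3, Matrix.det_fin_three, dotProduct, Fin.sum_univ_three]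
  ring

lemma dot_cross3_left {K : Type*} [Field K] (A B : Fin 3 → K) :
    A ⬝ᵥ cross3 A B = 0 := by
  simp [cross3, dotProduct, Fin.sum_univ_three]
  ring

lemma dot_cross3_right {K : Type*} [Field K] (A B : Fin 3 → K) :
    B ⬝ᵥ cross3 A B = 0 := by
  simp [cross3, dotProduct, Fin.sum_univ_three]
  ring

/-- Four pairs of lines forming degenerate conics in a pencil:
evaluating the pencil relation at the four intersection points yields
the determinant identities of the proof of Theorem 5.1. -/
theorem pencil_det_identities {K : Type*} [Field K]
    (X1 Y1 X2 Y2 X3 Y3 X4 Y4 : Fin 3 → K) (lam : K)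
    (hpencil : ∀ v : Fin 3 → K,
      lam ^ 2 * ((X1 ⬝ᵥ v) * (Y1 ⬝ᵥ v)) + (X2 ⬝ᵥ v) * (Y2 ⬝ᵥ v)
        + lam * ((X3 ⬝ᵥ v) * (Y3 ⬝ᵥ v)) = (X4 ⬝ᵥ v) * (Y4 ⬝ᵥ v)) :
    lam * (det3 X3 X1 X2 * det3 Y3 X1 X2) = det3 X4 X1 X2 * det3 Y4 X1 X2 ∧
    lam * (det3 X3 X1 Y2 * det3 Y3 X1 Y2) = det3 X4 X1 Y2 * det3 Y4 X1 Y2 ∧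
    lam * (det3 X3 Y1 X2 * det3 Y3 Y1 X2) = det3 X4 Y1 X2 * det3 Y4 Y1 X2 ∧
    lam * (det3 X3 Y1 Y2 * det3 Y3 Y1 Y2) = det3 X4 Y1 Y2 * det3 Y4 Y1 Y2 := by
  refine ⟨?_, ?_, ?_, ?_⟩
  · have h := hpencil (cross3 X1 X2)
    simp only [dot_cross3_left, dot_cross3_right, dot_cross3] at h
    simpa using h
  · have h := hpencil (cross3 X1 Y2)
    simp only [dot_cross3_left, dot_cross3_right, dot_cross3] at h
    simpa using h
  · have h := hpencil (cross3 Y1 X2)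
    simp only [dot_cross3_left, dot_cross3_right, dot_cross3] at h
    simpa using h
  · have h := hpencil (cross3 Y1 Y2)
    simp only [dot_cross3_left, dot_cross3_right, dot_cross3] at h
    simpa using h
end

section
/- Let K be a field and let X1,X2,X3,Y1,Y2,Y3 ∈ K^3 satisfy X1+X2+X3+Y1+Y2+Y3 = 0. Set X7 = X1+X2+X3 and Y7 = Y1+Y2+X3. Then the following two equalities of products of determinants hold: (X2 X3 X7)·(X1 Y3 Y7) = (X1 X3 X7)·(X2 Y3 Y7), and (Y2 X3 Y7)·(Y1 Y3 X7) = (Y1 X3 Y7)·(Y2 Y3 X7). (This is Theorem 5.2 of the paper, written without denominators: the relations between the bitangent pairs of syzygetic Steiner complexes, after the Riemann normalization of the equations of the lines.) -/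
open Matrix

/-- Theorem 5.2 (without denominators): relations between the bitangent pairs of
syzygetic Steiner complexes after the Riemann normalization, with
X7 = X1 + X2 + X3 and Y7 = Y1 + Y2 + X3. -/
theorem syzygetic_steiner_det_identities {K : Type*} [Field K]
    (X1 X2 X3 Y1 Y2 Y3 : Fin 3 → K)
    (hsum : X1 + X2 + X3 + Y1 + Y2 + Y3 = 0)
    (X7 Y7 : Fin 3 → K)
    (hX7 : X7 = X1 + X2 + X3)
    (hY7 : Y7 = Y1 + Y2 + X3) :
    det3 X2 X3 X7 * det3 X1 Y3 Y7 = det3 X1 X3 X7 * det3 X2 Y3 Y7 ∧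
    det3 Y2 X3 Y7 * det3 Y1 Y3 X7 = det3 Y1 X3 Y7 * det3 Y2 Y3 X7 := by
  have hY3 : Y3 = -(X1 + X2 + X3 + Y1 + Y2) := by
    have := hsum
    linear_combination hsum
  subst hX7 hY7 hY3
  simp only [det3, Matrix.det_fin_three, Matrix.of_apply, Matrix.cons_val', Matrix.cons_val_zero,
    Matrix.cons_val_one, Matrix.head_cons, Matrix.empty_val', Matrix.cons_val_fin_one,
    Matrix.head_fin_const, Matrix.cons_val_two, Matrix.tail_cons, Pi.add_apply, Pi.neg_apply]
  constructor <;> ring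
end

section
/- Let K be a field and let X1,X2,X3,Y1,Y2,Y3 ∈ K^3 be coefficient vectors of linear forms with X1+X2+X3+Y1+Y2+Y3 = 0, det conditions (X1 X2 X3) ≠ 0 and (Y1 Y2 Y3) ≠ 0, and set X7 = X1+X2+X3 and Q(v) = (ℓ_{X1}ℓ_{Y1} + ℓ_{X2}ℓ_{Y2} − ℓ_{X3}ℓ_{Y3})(v)^2 − 4(ℓ_{X1}ℓ_{Y1}ℓ_{X2}ℓ_{Y2})(v). For all nonzero scalars a1,a2,a3,b1,b2,b3,c ∈ K, put x_i = a_i·X_i, y_i = b_i·Y_i (i=1,2,3) and x7 = c·X7 (arbitrary rescalings of the equations of the seven bitangent lines), and set d1 = (x7 x2 x3)(x7 y2 y3)/((x1 x2 x3)(y1 y2 y3)), d2 = (x1 x7 x3)(y1 x7 y3)/((x1 x2 x3)(y1 y2 y3)), d3 = (x1 x2 x7)(y1 y2 x7)/((x1 x2 x3)(y1 y2 y3)). Then for all v ∈ K^3: (d1·ℓ_{x1}(v)ℓ_{y1}(v) + d2·ℓ_{x2}(v)ℓ_{y2}(v) − d3·ℓ_{x3}(v)ℓ_{y3}(v))^2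 − 4·d1·d2·ℓ_{x1}(v)ℓ_{y1}(v)ℓ_{x2}(v)ℓ_{y2}(v) = c^4·Q(v). In particular the quartic produced by the formula of Theorem 4.1 from any choice of defining equations of the seven bitangent lines is proportional to Q. -/
open Matrix

lemma det3_expand {K : Type*} [Field K] (A B C : Fin 3 → K) :
    det3 A B C = A 0 * B 1 * C 2 - A 0 * B 2 * C 1 - A 1 * B 0 * C 2
      + A 1 * B 2 * C 0 + A 2 * B 0 * C 1 - A 2 * B 1 * C 0 := by
  simp [det3, Matrix.det_fin_three]

set_option maxHeartbeats 1600000 in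
/-- Theorem 4.1: the quartic produced by the reconstruction formula from arbitrary
rescalings xᵢ = aᵢ·Xᵢ, yᵢ = bᵢ·Yᵢ, x7 = c·X7 of the seven bitangent lines is
proportional (with factor c⁴) to the original Riemann model Q. -/
theorem reconstruction_formula_proportional {K : Type*} [Field K]
    (X1 X2 X3 Y1 Y2 Y3 : Fin 3 → K)
    (hsum : X1 + X2 + X3 + Y1 + Y2 + Y3 = 0)
    (hdetX : det3 X1 X2 X3 ≠ 0) (hdetY : det3 Y1 Y2 Y3 ≠ 0)
    (X7 : Fin 3 → K) (hX7 : X7 = X1 + X2 + X3)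
    (a1 a2 a3 b1 b2 b3 c : K)
    (ha1 : a1 ≠ 0) (ha2 : a2 ≠ 0) (ha3 : a3 ≠ 0)
    (hb1 : b1 ≠ 0) (hb2 : b2 ≠ 0) (hb3 : b3 ≠ 0) (hc : c ≠ 0)
    (x1 x2 x3 y1 y2 y3 x7 : Fin 3 → K)
    (hx1 : x1 = a1 • X1) (hx2 : x2 = a2 • X2) (hx3 : x3 = a3 • X3)
    (hy1 : y1 = b1 • Y1) (hy2 : y2 = b2 • Y2) (hy3 : y3 = b3 • Y3)
    (hx7 : x7 = c • X7)
    (d1 d2 d3 : K)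
    (hd1 : d1 = det3 x7 x2 x3 * det3 x7 y2 y3 / (det3 x1 x2 x3 * det3 y1 y2 y3))
    (hd2 : d2 = det3 x1 x7 x3 * det3 y1 x7 y3 / (det3 x1 x2 x3 * det3 y1 y2 y3))
    (hd3 : d3 = det3 x1 x2 x7 * det3 y1 y2 x7 / (det3 x1 x2 x3 * det3 y1 y2 y3)) :
    ∀ v : Fin 3 → K,
      (d1 * ((x1 ⬝ᵥ v) * (y1 ⬝ᵥ v)) + d2 * ((x2 ⬝ᵥ v) * (y2 ⬝ᵥ v))
          - d3 * ((x3 ⬝ᵥ v) * (y3 ⬝ᵥ v))) ^ 2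
        - 4 * d1 * d2 * ((x1 ⬝ᵥ v) * (y1 ⬝ᵥ v) * ((x2 ⬝ᵥ v) * (y2 ⬝ᵥ v)))
      = c ^ 4 *
        (((X1 ⬝ᵥ v) * (Y1 ⬝ᵥ v) + (X2 ⬝ᵥ v) * (Y2 ⬝ᵥ v)
            - (X3 ⬝ᵥ v) * (Y3 ⬝ᵥ v)) ^ 2
          - 4 * ((X1 ⬝ᵥ v) * (Y1 ⬝ᵥ v) * ((X2 ⬝ᵥ v) * (Y2 ⬝ᵥ v)))) := by
  have hX7' : X7 = -(Y1 + Y2 + Y3) := by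
    rw [hX7]; linear_combination hsum
  have hsE : ∀ i, X7 i = -(Y1 i + Y2 i + Y3 i) := fun i => by
    rw [hX7']; simp
  have hXE : ∀ i, X7 i = X1 i + X2 i + X3 i := fun i => by
    rw [hX7]; simp
  -- determinant computations
  have e1 : det3 x7 x2 x3 = c * a2 * a3 * det3 X1 X2 X3 := by
    simp only [det3_expand, hx7, hx2, hx3, Pi.smul_apply, smul_eq_mul,
      hXE 0, hXE 1, hXE 2]
    ring
  have e2 : det3 x7 y2 y3 = -(c * b2 * b3) * det3 Y1 Y2 Y3 := by
    simp only [det3_expand, hx7, hy2, hy3, Pi.smul_apply, smul_eq_mul,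
      hsE 0, hsE 1, hsE 2]
    ring
  have e3 : det3 x1 x7 x3 = c * a1 * a3 * det3 X1 X2 X3 := by
    simp only [det3_expand, hx7, hx1, hx3, Pi.smul_apply, smul_eq_mul,
      hXE 0, hXE 1, hXE 2]
    ring
  have e4 : det3 y1 x7 y3 = -(c * b1 * b3) * det3 Y1 Y2 Y3 := by
    simp only [det3_expand, hx7, hy1, hy3, Pi.smul_apply, smul_eq_mul,
      hsE 0, hsE 1, hsE 2]
    ring
  have e5 : det3 x1 x2 x7 = c * a1 * a2 * det3 X1 X2 X3 := by
    simp only [det3_expand, hx7, hx1, hx2, Pi.smul_apply, smul_eq_mul,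
      hXE 0, hXE 1, hXE 2]
    ring
  have e6 : det3 y1 y2 x7 = -(c * b1 * b2) * det3 Y1 Y2 Y3 := by
    simp only [det3_expand, hx7, hy1, hy2, Pi.smul_apply, smul_eq_mul,
      hsE 0, hsE 1, hsE 2]
    ring
  have e7 : det3 x1 x2 x3 = a1 * a2 * a3 * det3 X1 X2 X3 := by
    simp only [det3_expand, hx1, hx2, hx3, Pi.smul_apply, smul_eq_mul]
    ring
  have e8 : det3 y1 y2 y3 = b1 * b2 * b3 * det3 Y1 Y2 Y3 := by
    simp only [det3_expand, hy1, hy2, hy3, Pi.smul_apply, smul_eq_mul]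
    ring
  have hden : (a1 * a2 * a3 * det3 X1 X2 X3) * (b1 * b2 * b3 * det3 Y1 Y2 Y3) ≠ 0 :=
    mul_ne_zero (mul_ne_zero (mul_ne_zero (mul_ne_zero ha1 ha2) ha3) hdetX)
      (mul_ne_zero (mul_ne_zero (mul_ne_zero hb1 hb2) hb3) hdetY)
  have hd1' : d1 = -(c ^ 2) / (a1 * b1) := by
    rw [hd1, e1, e2, e7, e8, div_eq_div_iff hden (mul_ne_zero ha1 hb1)]
    ring
  have hd2' : d2 = -(c ^ 2) / (a2 * b2) := by
    rw [hd2, e3, e4, e7, e8, div_eq_div_iff hden (mul_ne_zero ha2 hb2)]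
    ring
  have hd3' : d3 = -(c ^ 2) / (a3 * b3) := by
    rw [hd3, e5, e6, e7, e8, div_eq_div_iff hden (mul_ne_zero ha3 hb3)]
    ring
  intro v
  have sd : ∀ (a : K) (A : Fin 3 → K), (a • A) ⬝ᵥ v = a * (A ⬝ᵥ v) := fun a A =>
    smul_dotProduct a A v
  rw [hd1', hd2', hd3', hx1, hx2, hx3, hy1, hy2, hy3, sd, sd, sd, sd, sd, sd]
  have T1 : -(c ^ 2) / (a1 * b1) * (a1 * (X1 ⬝ᵥ v) * (b1 * (Y1 ⬝ᵥ v)))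
      = -(c ^ 2) * ((X1 ⬝ᵥ v) * (Y1 ⬝ᵥ v)) := by
    field_simp
  have T2 : -(c ^ 2) / (a2 * b2) * (a2 * (X2 ⬝ᵥ v) * (b2 * (Y2 ⬝ᵥ v)))
      = -(c ^ 2) * ((X2 ⬝ᵥ v) * (Y2 ⬝ᵥ v)) := by
    field_simp
  have T3 : -(c ^ 2) / (a3 * b3) * (a3 * (X3 ⬝ᵥ v) * (b3 * (Y3 ⬝ᵥ v)))
      = -(c ^ 2) * ((X3 ⬝ᵥ v) * (Y3 ⬝ᵥ v)) := by
    field_simp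
  have T4 : 4 * (-(c ^ 2) / (a1 * b1)) * (-(c ^ 2) / (a2 * b2)) *
        (a1 * (X1 ⬝ᵥ v) * (b1 * (Y1 ⬝ᵥ v)) * (a2 * (X2 ⬝ᵥ v) * (b2 * (Y2 ⬝ᵥ v))))
      = 4 * c ^ 4 * ((X1 ⬝ᵥ v) * (Y1 ⬝ᵥ v) * ((X2 ⬝ᵥ v) * (Y2 ⬝ᵥ v))) := by
    field_simp
  rw [T1, T2, T3, T4]
  ring
end
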